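/- Let α, β, c, κ₁, κ₃, Dα, Dβ be real numbers with α ≠ 0 and β ≠ 0, satisfying: Dα = 0; Dα = β(α + κ₃ + 3c/(4α)); Dβ = β² + βκ₁ + (c/(2α))(β²/α − c/(4α)); κ₃ = −4α; βκ₁ = (c/(4α))(c/(4α) − β²/α) − 4β²; κ₁(κ₃ + c/(4α)) + β(κ₃ − c/(2α)) = 0; and 6β·Dβ = 2α·Dα. Then a contradiction follows (the equations force c = 4α², βκ₁ = α² − 5β², κ₁ = −2β, hence 3β² = α², and then Dβ = −5β² together with 6β·Dβ = 0 forces β = 0). (This is the final step of the proof of Proposition 3.2, where Dα, Dβ are the derivatives of α, β along φU and the last equation comes from differentiating 3β² = α² along φU.) -/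

import Mathlib

/-- The final step of the proof of Proposition 3.2: with `Dα`, `Dβ` the derivatives of `α`, `β`
along `φU` and `(φU)α = 0`, the listed relations are contradictory (they force `c = 4α²`,
`βκ₁ = α² − 5β²`, `κ₁ = −2β`, hence `3β² = α²`, and then `β = 0`). -/
theorem prop_3_2_final_contradiction
    (α β c κ₁ κ₃ Dα Dβ : ℝ) (hα : α ≠ 0) (hβ : β ≠ 0)
    (hDα0 : Dα = 0)
    (h312 : Dα = β * (α + κ₃ + 3 * c / (4 * α)))
    (h313 : Dβ = β ^ 2 + β * κ₁ + (c / (2 * α)) * (β ^ 2 / α - c / (4 * α)))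
    (h317 : κ₃ = -4 * α)
    (h318 : β * κ₁ = (c / (4 * α)) * (c / (4 * α) - β ^ 2 / α) - 4 * β ^ 2)
    (h316 : κ₁ * (κ₃ + c / (4 * α)) + β * (κ₃ - c / (2 * α)) = 0)
    (hdiff : 6 * β * Dβ = 2 * α * Dα) :
    False := by
  subst h317 hDα0
  have h1 : α + -4 * α + 3 * c / (4 * α) = 0 := by
    rcases mul_eq_zero.mp h312.symm with h | h
    · exact absurd h hβ
    · exact h
  have hc : c = 4 * α ^ 2 := by
    field_simp at h1
    nlinarith [h1]
  subst hc
  have e1 : 4 * α ^ 2 / (4 * α) = α := by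
    field_simp
  have e2 : 4 * α ^ 2 / (2 * α) = 2 * α := by
    field_simp; ring
  rw [e1] at h316 h318
  rw [e2] at h313 h316
  have hκ : κ₁ = -2 * β := by
    have h : (-3 * α) * (κ₁ + 2 * β) = 0 := by linear_combination h316
    rcases mul_eq_zero.mp h with h | h
    · exact absurd (by linarith : α = 0) hα
    · linarith
  subst hκ
  have h3 : α ^ 2 = 3 * β ^ 2 := by
    field_simp at h318
    nlinarith [h318, sq_nonneg α, mul_self_nonneg α]
  have hDβ : Dβ = -5 * β ^ 2 := by
    field_simp at h313
    have h : α ^ 2 * (Dβ + 5 * β ^ 2) = 0 := by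
      linear_combination α ^ 2 * h313 + (-2 * α ^ 2) * h3
    have h2 := (mul_eq_zero.mp h).resolve_left (pow_ne_zero 2 hα)
    linarith
  rw [hDβ] at hdiff
  have : β ^ 3 = 0 := by nlinarith [hdiff]
  exact hβ (pow_eq_zero_iff (by norm_num)|>.mp this)
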